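/- Let G = (V, ω, μ) be a locally finite connected weighted graph with D_μ < ∞. Let h : V → ℝ be nonnegative with ∑_{y∈V} μ(y) h(y) < ∞, and let g : V → ℝ be bounded. Then the sums ∑_{y∈V} μ(y) (Δh)(y) g(y) and ∑_{y∈V} μ(y) h(y) (Δg)(y) both converge absolutely and are equal. -/

import Mathlib

open Set

/-- The μ-Laplacian on a weighted graph. -/
noncomputable def graphLap {V : Type*} (ω : V → V → ℝ) (μ : V → ℝ)
    (h : V → ℝ) (x : V) : ℝ :=
  (∑' y, ω x y * (h y - h x)) / μ x

/-- Green's formula: for `h ≥ 0` with `∑_y μ(y) h(y) < ∞` and `g` bounded,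
the sums `∑_y μ(y) Δh(y) g(y)` and `∑_y μ(y) h(y) Δg(y)` converge absolutely and agree. -/
theorem graphLap_selfadjoint
    {V : Type*} [Countable V] (ω : V → V → ℝ) (μ : V → ℝ)
    (hsymm : ∀ x y, ω x y = ω y x)
    (hwnn : ∀ x y, 0 ≤ ω x y)
    (hμpos : ∀ x, 0 < μ x)
    (hlocfin : ∀ x, {y | 0 < ω x y}.Finite)
    (hdeg : ∀ x, ∃ y, 0 < ω x y)
    (hconn : ∀ x y, Relation.ReflTransGen (fun a b => 0 < ω a b) x y)
    (Dμ : ℝ) (hDμ : ∀ x, (∑' y, ω x y) / μ x ≤ Dμ)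
    (h g : V → ℝ)
    (hh_nonneg : ∀ x, 0 ≤ h x)
    (hh_sum : Summable fun y => μ y * h y)
    (A : ℝ) (hg : ∀ x, |g x| ≤ A) :
    Summable (fun y => |μ y * graphLap ω μ h y * g y|) ∧
    Summable (fun y => |μ y * h y * graphLap ω μ g y|) ∧
    ∑' y, μ y * graphLap ω μ h y * g y = ∑' y, μ y * h y * graphLap ω μ g y := by
  classical
  rcases isEmpty_or_nonempty V with hV | hV
  · exact ⟨summable_of_finite_support (Set.toFinite _),
      summable_of_finite_support (Set.toFinite _),
      tsum_congr fun y => hV.elim y⟩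
  have hA : 0 ≤ A := le_trans (abs_nonneg _) (hg (Classical.arbitrary V))
  -- each row of ω is summable (finite support)
  have hω_summ : ∀ x, Summable (fun y => ω x y) := by
    intro x
    apply summable_of_finite_support
    refine (hlocfin x).subset ?_
    intro y hy
    exact lt_of_le_of_ne (hwnn x y) (Ne.symm hy)
  -- row sums bounded
  have hrow : ∀ x, ∑' y, ω x y ≤ Dμ * μ x := by
    intro x
    have := hDμ x
    rw [div_le_iff₀ (hμpos x)] at this
    linarith [this]
  -- S1 : Summable (fun p => ω p.1 p.2 * h p.1)
  have S1nn : ∀ p : V × V, 0 ≤ ω p.1 p.2 * h p.1 :=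
    fun p => mul_nonneg (hwnn _ _) (hh_nonneg _)
  have S1 : Summable (fun p : V × V => ω p.1 p.2 * h p.1) := by
    rw [summable_prod_of_nonneg S1nn]
    refine ⟨fun y => (hω_summ y).mul_right (h y), ?_⟩
    refine Summable.of_nonneg_of_le (fun y => tsum_nonneg fun x => S1nn (y, x))
      (fun y => ?_) (hh_sum.mul_left Dμ)
    have hy : ∑' x, ω y x * h y = (∑' x, ω y x) * h y := tsum_mul_right
    rw [hy]
    calc (∑' x, ω y x) * h y ≤ (Dμ * μ y) * h y :=
          mul_le_mul_of_nonneg_right (hrow y) (hh_nonneg y)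
      _ = Dμ * (μ y * h y) := by ring
  have S2 : Summable (fun p : V × V => ω p.1 p.2 * h p.2) := by
    have := S1.prod_symm
    convert this using 2 with p
    simp [Prod.swap, hsymm p.1 p.2]
  -- F and G
  set F : V × V → ℝ := fun p => ω p.1 p.2 * (h p.2 - h p.1) * g p.1 with hFdef
  set G : V × V → ℝ := fun p => ω p.1 p.2 * (g p.2 - g p.1) * h p.1 with hGdef
  have hFbound : ∀ p : V × V, |F p| ≤ A * (ω p.1 p.2 * h p.2 + ω p.1 p.2 * h p.1) := by
    intro ⟨y, x⟩
    have h1 : |h x - h y| ≤ h x + h y := by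
      rw [abs_sub_le_iff]; constructor <;> nlinarith [hh_nonneg x, hh_nonneg y]
    calc |ω y x * (h x - h y) * g y| = ω y x * |h x - h y| * |g y| := by
          rw [abs_mul, abs_mul, abs_of_nonneg (hwnn y x)]
      _ ≤ ω y x * (h x + h y) * A := by
          exact mul_le_mul (mul_le_mul_of_nonneg_left h1 (hwnn y x)) (hg y) (abs_nonneg _)
            (mul_nonneg (hwnn y x) (add_nonneg (hh_nonneg x) (hh_nonneg y)))
      _ = A * (ω y x * h x + ω y x * h y) := by ring
  have hGbound : ∀ p : V × V, |G p| ≤ (2 * A) * (ω p.1 p.2 * h p.1) := by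
    intro ⟨y, x⟩
    have h1 : |g x - g y| ≤ 2 * A := by
      calc |g x - g y| ≤ |g x| + |g y| := abs_sub _ _
        _ ≤ A + A := add_le_add (hg x) (hg y)
        _ = 2 * A := by ring
    calc |ω y x * (g x - g y) * h y| = ω y x * |g x - g y| * h y := by
          rw [abs_mul, abs_mul, abs_of_nonneg (hwnn y x), abs_of_nonneg (hh_nonneg y)]
      _ ≤ ω y x * (2 * A) * h y := by
          apply mul_le_mul_of_nonneg_right _ (hh_nonneg y)
          exact mul_le_mul_of_nonneg_left h1 (hwnn y x)
      _ = (2 * A) * (ω y x * h y) := by ring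
  have hFabs : Summable (fun p => |F p|) := by
    apply Summable.of_nonneg_of_le (fun p => abs_nonneg _) hFbound
    exact (S2.add S1).mul_left A
  have hGabs : Summable (fun p => |G p|) := by
    apply Summable.of_nonneg_of_le (fun p => abs_nonneg _) hGbound
    exact (S1.mul_left (2 * A))
  have hF : Summable F := by
    apply Summable.of_norm_bounded hFabs
    intro p; simp [Real.norm_eq_abs]
  have hG : Summable G := by
    apply Summable.of_norm_bounded hGabs
    intro p; simp [Real.norm_eq_abs]
  -- pointwise identities
  have hμΔh : ∀ y, μ y * graphLap ω μ h y * g y = ∑' x, F (y, x) := by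
    intro y
    have e : (∑' x, F (y, x)) = (∑' x, ω y x * (h x - h y)) * g y := by
      simp only [hFdef]; exact tsum_mul_right
    have hne := (hμpos y).ne'
    have cancel : μ y * ((∑' x, ω y x * (h x - h y)) / μ y) * g y
        = (∑' x, ω y x * (h x - h y)) * g y := by
      rw [mul_div_cancel₀ _ hne]
    rw [e, graphLap, cancel]
  have hμΔg : ∀ y, μ y * h y * graphLap ω μ g y = ∑' x, G (y, x) := by
    intro y
    have e : (∑' x, G (y, x)) = (∑' x, ω y x * (g x - g y)) * h y := by
      simp only [hGdef]; exact tsum_mul_right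
    have hne := (hμpos y).ne'
    have cancel : μ y * h y * ((∑' x, ω y x * (g x - g y)) / μ y)
        = (∑' x, ω y x * (g x - g y)) * h y := by
      field_simp
    rw [e, graphLap, cancel]
  -- slicewise summability of |F|, |G|
  have hFabs_slices := (summable_prod_of_nonneg (fun p => abs_nonneg (F p))).mp hFabs
  have hGabs_slices := (summable_prod_of_nonneg (fun p => abs_nonneg (G p))).mp hGabs
  -- first summability claim
  have sum1 : Summable (fun y => |μ y * graphLap ω μ h y * g y|) := by
    apply Summable.of_nonneg_of_le (fun y => abs_nonneg _) _ hFabs_slices.2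
    intro y
    rw [hμΔh y]
    simpa [Real.norm_eq_abs] using norm_tsum_le_tsum_norm
      (f := fun x => F (y, x)) (by simpa [Real.norm_eq_abs] using hFabs_slices.1 y)
  have sum2 : Summable (fun y => |μ y * h y * graphLap ω μ g y|) := by
    apply Summable.of_nonneg_of_le (fun y => abs_nonneg _) _ hGabs_slices.2
    intro y
    rw [hμΔg y]
    simpa [Real.norm_eq_abs] using norm_tsum_le_tsum_norm
      (f := fun x => G (y, x)) (by simpa [Real.norm_eq_abs] using hGabs_slices.1 y)
  refine ⟨sum1, sum2, ?_⟩
  -- split into pieces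
  set F1 : V × V → ℝ := fun p => ω p.1 p.2 * h p.2 * g p.1 with hF1def
  set F2 : V × V → ℝ := fun p => ω p.1 p.2 * h p.1 * g p.1 with hF2def
  set G1 : V × V → ℝ := fun p => ω p.1 p.2 * g p.2 * h p.1 with hG1def
  have hF1 : Summable F1 := by
    apply Summable.of_norm_bounded (S2.mul_left A)
    intro ⟨y, x⟩
    simp only [Real.norm_eq_abs, hF1def]
    calc |ω y x * h x * g y| = ω y x * h x * |g y| := by
          rw [abs_mul, abs_of_nonneg (mul_nonneg (hwnn y x) (hh_nonneg x))]
      _ ≤ ω y x * h x * A := by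
          exact mul_le_mul_of_nonneg_left (hg y) (mul_nonneg (hwnn y x) (hh_nonneg x))
      _ = A * (ω y x * h x) := by ring
  have hF2 : Summable F2 := by
    apply Summable.of_norm_bounded (S1.mul_left A)
    intro ⟨y, x⟩
    simp only [Real.norm_eq_abs, hF2def]
    calc |ω y x * h y * g y| = ω y x * h y * |g y| := by
          rw [abs_mul, abs_of_nonneg (mul_nonneg (hwnn y x) (hh_nonneg y))]
      _ ≤ ω y x * h y * A := by
          exact mul_le_mul_of_nonneg_left (hg y) (mul_nonneg (hwnn y x) (hh_nonneg y))
      _ = A * (ω y x * h y) := by ring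
  have hG1 : Summable G1 := by
    apply Summable.of_norm_bounded (S1.mul_left A)
    intro ⟨y, x⟩
    simp only [Real.norm_eq_abs, hG1def]
    calc |ω y x * g x * h y| = ω y x * |g x| * h y := by
          rw [abs_mul, abs_mul, abs_of_nonneg (hwnn y x), abs_of_nonneg (hh_nonneg y)]
      _ ≤ ω y x * A * h y := by
          apply mul_le_mul_of_nonneg_right _ (hh_nonneg y)
          exact mul_le_mul_of_nonneg_left (hg x) (hwnn y x)
      _ = A * (ω y x * h y) := by ring
  -- key equality of double sums
  have key : ∑' p : V × V, F p = ∑' p : V × V, G p := by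
    have eF : ∑' p : V × V, F p = (∑' p : V × V, F1 p) - ∑' p : V × V, F2 p := by
      rw [← hF1.tsum_sub hF2]
      apply tsum_congr; intro p; simp only [hFdef, hF1def, hF2def]; ring
    have eG : ∑' p : V × V, G p = (∑' p : V × V, G1 p) - ∑' p : V × V, F2 p := by
      rw [← hG1.tsum_sub hF2]
      apply tsum_congr; intro p; simp only [hGdef, hG1def, hF2def]; ring
    have eswap : ∑' p : V × V, F1 p = ∑' p : V × V, G1 p := by
      rw [← (Equiv.prodComm V V).tsum_eq G1]
      apply tsum_congr; intro p
      simp only [hF1def, hG1def, Equiv.prodComm_apply, Prod.fst_swap, Prod.snd_swap]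
      rw [hsymm p.2 p.1]; ring
    rw [eF, eG, eswap]
  calc ∑' y, μ y * graphLap ω μ h y * g y = ∑' y, ∑' x, F (y, x) := tsum_congr hμΔh
    _ = ∑' p : V × V, F p := (hF.tsum_prod' fun y => (hF.prod_factor y)).symm
    _ = ∑' p : V × V, G p := key
    _ = ∑' y, ∑' x, G (y, x) := hG.tsum_prod' fun y => (hG.prod_factor y)
    _ = ∑' y, μ y * h y * graphLap ω μ g y := (tsum_congr hμΔg).symm
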